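/- Let C be a nonzero binary code of length n. Then the pair (C, C) is a maximal element of the poset 𝒫 of CSS-T pairs (i.e., (C, C) is a CSS-T pair and every CSS-T pair (D₁, D₂) with D₂ ≠ {0}, C ⊆ D₁ and C ⊆ D₂ satisfies D₁ = D₂ = C) if and only if C^{⋆2} = C^⊥. -/

import Mathlib

open Finset

/-- The Euclidean dual of a binary code. -/
def dualCode {n : ℕ} (C : Submodule (ZMod 2) (Fin n → ZMod 2)) :
    Submodule (ZMod 2) (Fin n → ZMod 2) where
  carrier := {x | ∀ c ∈ C, ∑ i, x i * c i = 0}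
  add_mem' := by
    intro a b ha hb
    intro c hc
    have : ∑ i, (a + b) i * c i = ∑ i, (a i * c i + b i * c i) := by
      apply Finset.sum_congr rfl
      intro i _
      simp [add_mul]
    rw [this, Finset.sum_add_distrib, ha c hc, hb c hc, add_zero]
  zero_mem' := by
    intro c hc
    simp
  smul_mem' := by
    intro r a ha
    intro c hc
    have : ∑ i, (r • a) i * c i = r * ∑ i, a i * c i := by
      rw [Finset.mul_sum]
      apply Finset.sum_congr rfl
      intro i _
      simp [mul_assoc]
    rw [this, ha c hc, mul_zero]

/-- The (componentwise) Schur product of two binary codes. -/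
def schur {n : ℕ} (C D : Submodule (ZMod 2) (Fin n → ZMod 2)) :
    Submodule (ZMod 2) (Fin n → ZMod 2) :=
  Submodule.span (ZMod 2) {x | ∃ c ∈ C, ∃ d ∈ D, x = c * d}

/-- A pair of binary codes `(C₁, C₂)` is a CSS-T pair if `C₂ ⊆ C₁ ∩ (C₁^{⋆2})^⊥`. -/
def IsCSST {n : ℕ} (C₁ C₂ : Submodule (ZMod 2) (Fin n → ZMod 2)) : Prop :=
  C₂ ≤ C₁ ⊓ dualCode (schur C₁ C₁)

section Aux
variable {n : ℕ}

/-- The standard pairing as a bilinear form. -/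
def pairingB (n : ℕ) : LinearMap.BilinForm (ZMod 2) (Fin n → ZMod 2) :=
  LinearMap.mk₂ (ZMod 2) (fun x y => ∑ i, x i * y i)
    (by intro a b c; simp [add_mul, Finset.sum_add_distrib])
    (by intro r a b; simp [Finset.mul_sum, mul_assoc])
    (by intro a b c; simp [mul_add, Finset.sum_add_distrib])
    (by intro r a b; simp [Finset.mul_sum]; ring_nf; simp [mul_assoc, mul_comm, mul_left_comm])

lemma pairingB_apply (x y : Fin n → ZMod 2) : pairingB n x y = ∑ i, x i * y i := rfl

lemma pairingB_symm : (pairingB n).IsSymm := by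
  refine ⟨fun x y => ?_⟩
  simp [pairingB_apply, mul_comm]

lemma pairingB_refl : (pairingB n).IsRefl := pairingB_symm.isRefl

lemma pairingB_nondeg : (pairingB n).Nondegenerate := by
  constructor <;> intro x hx
  all_goals
    funext i
    have := hx (Pi.single i 1)
    simpa [pairingB_apply, Pi.single_apply, Finset.sum_ite_eq', ite_mul] using this

lemma mem_dualCode {C : Submodule (ZMod 2) (Fin n → ZMod 2)} {x : Fin n → ZMod 2} :
    x ∈ dualCode C ↔ ∀ c ∈ C, ∑ i, x i * c i = 0 := Iff.rfl

lemma dualCode_eq_orthogonal (C : Submodule (ZMod 2) (Fin n → ZMod 2)) :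
    dualCode C = (pairingB n).orthogonal C := by
  ext x
  simp only [mem_dualCode, LinearMap.BilinForm.mem_orthogonal_iff, LinearMap.BilinForm.IsOrtho,
    pairingB_apply]
  constructor
  · intro h c hc; rw [← h c hc]; exact Finset.sum_congr rfl fun i _ => mul_comm _ _
  · intro h c hc; rw [← h c hc]; exact Finset.sum_congr rfl fun i _ => mul_comm _ _

lemma dualCode_dualCode (C : Submodule (ZMod 2) (Fin n → ZMod 2)) :
    dualCode (dualCode C) = C := by
  rw [dualCode_eq_orthogonal, dualCode_eq_orthogonal]
  exact LinearMap.BilinForm.orthogonal_orthogonal pairingB_nondeg pairingB_refl C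

lemma dualCode_antitone {C D : Submodule (ZMod 2) (Fin n → ZMod 2)} (h : C ≤ D) :
    dualCode D ≤ dualCode C := fun x hx c hc => hx c (h hc)

lemma le_dualCode_comm {C D : Submodule (ZMod 2) (Fin n → ZMod 2)} :
    C ≤ dualCode D ↔ D ≤ dualCode C := by
  constructor <;> intro h x hx c hc
  · have := h hc x hx
    rw [← this]; exact Finset.sum_congr rfl fun i _ => mul_comm _ _
  · have := h hc x hx
    rw [← this]; exact Finset.sum_congr rfl fun i _ => mul_comm _ _

lemma mul_self_zmod2 (a : ZMod 2) : a * a = a := by revert a; decide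

lemma vec_mul_self (c : Fin n → ZMod 2) : c * c = c := by
  funext i; exact mul_self_zmod2 (c i)

lemma le_schur_self (C : Submodule (ZMod 2) (Fin n → ZMod 2)) : C ≤ schur C C := by
  intro c hc
  apply Submodule.subset_span
  exact ⟨c, hc, c, hc, (vec_mul_self c).symm⟩

lemma schur_mono {C C' D D' : Submodule (ZMod 2) (Fin n → ZMod 2)} (h1 : C ≤ C') (h2 : D ≤ D') :
    schur C D ≤ schur C' D' := by
  apply Submodule.span_mono
  rintro x ⟨c, hc, d, hd, rfl⟩
  exact ⟨c, h1 hc, d, h2 hd, rfl⟩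

lemma mem_dualCode_schur {C D : Submodule (ZMod 2) (Fin n → ZMod 2)} {x : Fin n → ZMod 2}
    (h : ∀ c ∈ C, ∀ d ∈ D, ∑ i, x i * (c i * d i) = 0) : x ∈ dualCode (schur C D) := by
  intro s hs
  induction hs using Submodule.span_induction with
  | mem s hs =>
    obtain ⟨c, hc, d, hd, rfl⟩ := hs
    exact h c hc d hd
  | zero => simp
  | add a b _ _ ha hb =>
    have : ∑ i, x i * (a + b) i = ∑ i, (x i * a i + x i * b i) :=
      Finset.sum_congr rfl fun i _ => by simp [mul_add]
    rw [this, Finset.sum_add_distrib, ha, hb, add_zero]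
  | smul r a _ ha =>
    have : ∑ i, x i * (r • a) i = r * ∑ i, x i * a i := by
      rw [Finset.mul_sum]
      exact Finset.sum_congr rfl fun i _ => by
        simp only [Pi.smul_apply, smul_eq_mul]; ring
    rw [this, ha, mul_zero]

lemma schur_gen_mem {C D : Submodule (ZMod 2) (Fin n → ZMod 2)} {c d : Fin n → ZMod 2}
    (hc : c ∈ C) (hd : d ∈ D) : c * d ∈ schur C D :=
  Submodule.subset_span ⟨c, hc, d, hd, rfl⟩

end Aux

theorem stmt_12 (n : ℕ) (C : Submodule (ZMod 2) (Fin n → ZMod 2)) (hC : C ≠ ⊥) :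
    (IsCSST C C ∧
      ∀ D₁ D₂ : Submodule (ZMod 2) (Fin n → ZMod 2),
        IsCSST D₁ D₂ → D₂ ≠ ⊥ → C ≤ D₁ → C ≤ D₂ → D₁ = C ∧ D₂ = C)
    ↔ schur C C = dualCode C := by
  constructor
  · rintro ⟨h1, hmax⟩
    have hCdual : C ≤ dualCode (schur C C) := (le_inf_iff.mp h1).2
    by_contra hne
    have hdne : dualCode (schur C C) ≠ C := by
      intro h
      apply hne
      have := congrArg dualCode h
      rw [dualCode_dualCode] at this
      exact this
    obtain ⟨v, hv, hvC⟩ := SetLike.exists_of_lt (lt_of_le_of_ne hCdual hdne.symm)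
    have hvD : v ∈ dualCode C := dualCode_antitone (le_schur_self C) hv
    set D₁ : Submodule (ZMod 2) (Fin n → ZMod 2) := C ⊔ Submodule.span (ZMod 2) {v} with hD₁
    have hCD₁ : C ≤ D₁ := le_sup_left
    have hcsst : IsCSST D₁ C := by
      refine le_inf hCD₁ ?_
      intro e he
      apply mem_dualCode_schur
      intro a ha b hb
      rw [hD₁, Submodule.mem_sup] at ha hb
      obtain ⟨y, hy, z, hz, rfl⟩ := ha
      obtain ⟨y', hy', z', hz', rfl⟩ := hb
      rw [Submodule.mem_span_singleton] at hz hz'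
      obtain ⟨r, rfl⟩ := hz
      obtain ⟨s, rfl⟩ := hz'
      have expand : ∀ i, e i * ((y + r • v) i * (y' + s • v) i)
          = e i * (y i * y' i) + s * (v i * (y i * e i)) + r * (v i * (y' i * e i))
            + (r * s) * (v i * v i * e i) := by
        intro i
        simp only [Pi.add_apply, Pi.smul_apply, smul_eq_mul]
        ring
      have t1 : ∑ i, e i * (y i * y' i) = 0 := hCdual he _ (schur_gen_mem hy hy')
      have t2 : ∑ i, v i * (y i * e i) = 0 := hv _ (schur_gen_mem hy he)
      have t3 : ∑ i, v i * (y' i * e i) = 0 := hv _ (schur_gen_mem hy' he)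
      have t4 : ∑ i, v i * v i * e i = 0 := by
        have : ∑ i, v i * v i * e i = ∑ i, v i * e i :=
          Finset.sum_congr rfl fun i _ => by rw [mul_self_zmod2]
        rw [this]; exact hvD e he
      calc ∑ i, e i * ((y + r • v) i * (y' + s • v) i)
          = ∑ i, (e i * (y i * y' i) + s * (v i * (y i * e i)) + r * (v i * (y' i * e i))
            + (r * s) * (v i * v i * e i)) := Finset.sum_congr rfl fun i _ => expand i
        _ = (∑ i, e i * (y i * y' i)) + s * (∑ i, v i * (y i * e i))
            + r * (∑ i, v i * (y' i * e i)) + (r * s) * (∑ i, v i * v i * e i) := by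
          simp [Finset.sum_add_distrib, Finset.mul_sum]
        _ = 0 := by rw [t1, t2, t3, t4]; ring
    have hD1eq : D₁ = C := (hmax D₁ C hcsst hC hCD₁ le_rfl).1
    apply hvC
    rw [← hD1eq]
    exact Submodule.mem_sup_right (Submodule.mem_span_singleton_self v)
  · intro h
    have hdd : dualCode (schur C C) = C := by rw [h, dualCode_dualCode]
    constructor
    · exact le_inf le_rfl (by rw [hdd])
    · intro D₁ D₂ hD hD2 h1 h2
      have hD2le : D₂ ≤ dualCode (schur D₁ D₁) := (le_inf_iff.mp hD).2
      have hD2C : D₂ ≤ C := by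
        calc D₂ ≤ dualCode (schur D₁ D₁) := hD2le
        _ ≤ dualCode (schur C C) := dualCode_antitone (schur_mono h1 h1)
        _ = C := hdd
      have hD2eq : D₂ = C := le_antisymm hD2C h2
      refine ⟨?_, hD2eq⟩
      apply le_antisymm _ h1
      intro d hd
      have hmem : d ∈ dualCode (schur C C) := by
        apply mem_dualCode_schur
        intro c hc c' hc'
        have hcd : c * d ∈ schur D₁ D₁ := schur_gen_mem (h1 hc) hd
        have hz := hD2le (hD2eq ▸ hc' : c' ∈ D₂) _ hcd
        rw [← hz]
        exact Finset.sum_congr rfl fun i _ => by simp only [Pi.mul_apply]; ring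
      rw [hdd] at hmem
      exact hmem
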